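/- Let G be a maximally independent graph of type 2. Then at least one of the following holds: (i) G has a vertex of degree 2; (ii) every vertex of G of degree 3 lies in a subgraph of G isomorphic to the complete graph K₄; (iii) there exist a maximally independent graph G' of type 2 and a Henneberg 2 move G' → G. -/

import Mathlib

open SimpleGraph

noncomputable section

/-- The freedom number `f(H) = 2|V(H)| - |E(H)|` of a subgraph. -/
def subFreedom {V : Type} {G : SimpleGraph V} (H : G.Subgraph) : ℤ :=
  2 * (H.verts.ncard : ℤ) - (H.edgeSet.ncard : ℤ)

/-- The freedom number `f(G) = 2|V| - |E|` of a graph. -/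
def gFreedom {V : Type} (G : SimpleGraph V) : ℤ :=
  2 * ((Set.univ : Set V).ncard : ℤ) - (G.edgeSet.ncard : ℤ)

/-- `G` is independent of type 2: every subgraph (with nonempty vertex set)
has freedom number at least 2. -/
def Indep2 {V : Type} (G : SimpleGraph V) : Prop :=
  ∀ H : G.Subgraph, H.verts.Nonempty → 2 ≤ subFreedom H

/-- `G` is maximally independent of type 2. -/
def MaxIndep2 {V : Type} (G : SimpleGraph V) : Prop := Indep2 G ∧ gFreedom G = 2

/-- `G` is independent of type 3: every subgraph with at least one edge
has freedom number at least 3. -/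
def Indep3 {V : Type} (G : SimpleGraph V) : Prop :=
  ∀ H : G.Subgraph, H.edgeSet.Nonempty → 3 ≤ subFreedom H

/-- `G` is maximally independent of type 3. -/
def MaxIndep3 {V : Type} (G : SimpleGraph V) : Prop := Indep3 G ∧ gFreedom G = 3

/-- A Laman graph: connected and maximally independent of type 3. -/
def Laman {V : Type} (G : SimpleGraph V) : Prop := G.Connected ∧ MaxIndep3 G

/-- Henneberg 1 move: `G'` (on vertex type `β`) is obtained from `G` (on `α`)
via the vertex embedding `φ` by adjoining the new vertex `w` joined to the images
of two distinct vertices `a`, `b` of `G`. -/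
def Henneberg1Rel {α β : Type} (G : SimpleGraph α) (G' : SimpleGraph β)
    (φ : α ↪ β) (w : β) : Prop :=
  (∀ y : β, y ∈ Set.range φ ∨ y = w) ∧ w ∉ Set.range φ ∧
  ∃ a b : α, a ≠ b ∧
    ∀ x y : β, G'.Adj x y ↔
      ((∃ c d : α, G.Adj c d ∧ x = φ c ∧ y = φ d) ∨
       (x = w ∧ (y = φ a ∨ y = φ b)) ∨ (y = w ∧ (x = φ a ∨ x = φ b)))

/-- Henneberg 2 move: `G'` is obtained from `G` by breaking the edge `(u,v)` of `G`
at the new vertex `w` and adding an edge from `w` to a third vertex `z`. -/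
def Henneberg2Rel {α β : Type} (G : SimpleGraph α) (G' : SimpleGraph β)
    (φ : α ↪ β) (w : β) : Prop :=
  (∀ y : β, y ∈ Set.range φ ∨ y = w) ∧ w ∉ Set.range φ ∧
  ∃ u v z : α, G.Adj u v ∧ z ≠ u ∧ z ≠ v ∧
    ∀ x y : β, G'.Adj x y ↔
      ((∃ a b : α, G.Adj a b ∧ ¬ (s(a, b) = s(u, v)) ∧ x = φ a ∧ y = φ b) ∨
       (x = w ∧ (y = φ u ∨ y = φ v ∨ y = φ z)) ∨
       (y = w ∧ (x = φ u ∨ x = φ v ∨ x = φ z)))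

def finCastSuccEmb (n : ℕ) : Fin n ↪ Fin (n + 1) :=
  ⟨Fin.castSucc, Fin.castSucc_injective n⟩

/-- `Derived G0 n G` : the graph `G` on `Fin n` is obtained from the base graph `G0`
by a finite sequence of Henneberg 1 and Henneberg 2 moves. -/
inductive Derived {m : ℕ} (G0 : SimpleGraph (Fin m)) : (n : ℕ) → SimpleGraph (Fin n) → Prop
  | base : Derived G0 m G0
  | h1 {n : ℕ} {G : SimpleGraph (Fin n)} {G' : SimpleGraph (Fin (n + 1))} :
      Derived G0 n G → Henneberg1Rel G G' (finCastSuccEmb n) (Fin.last n) →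
      Derived G0 (n + 1) G'
  | h2 {n : ℕ} {G : SimpleGraph (Fin n)} {G' : SimpleGraph (Fin (n + 1))} :
      Derived G0 n G → Henneberg2Rel G G' (finCastSuccEmb n) (Fin.last n) →
      Derived G0 (n + 1) G'

section AuxLemmas

variable {V : Type} [Fintype V] {G : SimpleGraph V}

lemma subFreedom_sup_add_inf (A B : G.Subgraph) :
    subFreedom (A ⊔ B) + subFreedom (A ⊓ B) = subFreedom A + subFreedom B := by
  unfold subFreedom
  rw [Subgraph.verts_sup, Subgraph.verts_inf, Subgraph.edgeSet_sup, Subgraph.edgeSet_inf]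
  have h1 := Set.ncard_union_add_ncard_inter A.verts B.verts (Set.toFinite _) (Set.toFinite _)
  have h2 := Set.ncard_union_add_ncard_inter A.edgeSet B.edgeSet (Set.toFinite _) (Set.toFinite _)
  zify at h1 h2
  linarith

lemma sup_tight (hInd : Indep2 G) (A B : G.Subgraph) (hA : subFreedom A ≤ 2)
    (hB : subFreedom B ≤ 2) (hne : (A ⊓ B).verts.Nonempty) :
    subFreedom (A ⊔ B) ≤ 2 := by
  have h := subFreedom_sup_add_inf A B
  have h2 := hInd (A ⊓ B) hne
  linarith

lemma addE_in (K : G.Subgraph) {s t : V} (h : G.Adj s t) (hs : s ∈ K.verts)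
    (ht : t ∈ K.verts) : subFreedom (K ⊔ G.subgraphOfAdj h) ≤ subFreedom K := by
  unfold subFreedom
  rw [Subgraph.verts_sup, Subgraph.edgeSet_sup, subgraphOfAdj_verts]
  have hv : K.verts ∪ {s, t} = K.verts :=
    Set.union_eq_self_of_subset_right (Set.insert_subset hs (Set.singleton_subset_iff.2 ht))
  rw [hv]
  have he : K.edgeSet.ncard ≤ (K.edgeSet ∪ (G.subgraphOfAdj h).edgeSet).ncard :=
    Set.ncard_le_ncard Set.subset_union_left (Set.toFinite _)
  zify at he
  linarith

lemma addE_newv (K : G.Subgraph) {s t : V} (h : G.Adj s t) (hs : s ∈ K.verts)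
    (ht : t ∉ K.verts) : subFreedom (K ⊔ G.subgraphOfAdj h) ≤ subFreedom K + 1 := by
  unfold subFreedom
  rw [Subgraph.verts_sup, Subgraph.edgeSet_sup, subgraphOfAdj_verts, edgeSet_subgraphOfAdj]
  have hv : K.verts ∪ {s, t} = insert t K.verts := by
    ext u; simp only [Set.mem_union, Set.mem_insert_iff, Set.mem_singleton_iff]
    constructor
    · rintro (hu | rfl | rfl) <;> tauto
    · rintro (rfl | hu) <;> tauto
  have hne : s(s, t) ∉ K.edgeSet := fun hc => ht (K.edge_vert (K.adj_symm (Subgraph.mem_edgeSet.1 hc)))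
  rw [hv, Set.ncard_insert_of_notMem ht (Set.toFinite _), Set.union_singleton,
    Set.ncard_insert_of_notMem hne (Set.toFinite _)]
  push_cast
  linarith

lemma addE_newedge (K : G.Subgraph) {s t : V} (h : G.Adj s t) (hs : s ∈ K.verts)
    (ht : t ∈ K.verts) (he : s(s, t) ∉ K.edgeSet) :
    subFreedom (K ⊔ G.subgraphOfAdj h) ≤ subFreedom K - 1 := by
  unfold subFreedom
  rw [Subgraph.verts_sup, Subgraph.edgeSet_sup, subgraphOfAdj_verts, edgeSet_subgraphOfAdj]
  have hv : K.verts ∪ {s, t} = K.verts :=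
    Set.union_eq_self_of_subset_right (Set.insert_subset hs (Set.singleton_subset_iff.2 ht))
  rw [hv, Set.union_singleton, Set.ncard_insert_of_notMem he (Set.toFinite _)]
  push_cast
  linarith


lemma tail_contra (hInd : Indep2 G) {v a b c : V}
    (hva : G.Adj v a) (hvb : G.Adj v b) (hvc : G.Adj v c)
    (hab' : a ≠ b) (hac' : a ≠ c) (hbc' : b ≠ c)
    (K : G.Subgraph) (hv : v ∉ K.verts) (ha : a ∈ K.verts) (hb : b ∈ K.verts)
    (hc : c ∈ K.verts) (hK : subFreedom K ≤ 2) : False := by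
  set K1 := K ⊔ G.subgraphOfAdj hva.symm with hK1
  have hvK1 : v ∈ K1.verts := by simp [hK1, Subgraph.verts_sup]
  have hbK1 : b ∈ K1.verts := by simp [hK1, Subgraph.verts_sup, hb]
  have hcK1 : c ∈ K1.verts := by simp [hK1, Subgraph.verts_sup, hc]
  have f1 : subFreedom K1 ≤ 3 := by
    have := addE_newv K hva.symm ha hv; linarith
  have e1 : s(v, b) ∉ K1.edgeSet := by
    simp only [hK1, Subgraph.edgeSet_sup, Set.mem_union, edgeSet_subgraphOfAdj,
      Set.mem_singleton_iff]
    push_neg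
    constructor
    · intro hmem
      exact hv (K.edge_vert (Subgraph.mem_edgeSet.1 hmem))
    · intro hmem
      rcases Sym2.eq_iff.1 hmem with ⟨h1, h2⟩ | ⟨h1, h2⟩
      · exact hva.ne h1
      · exact hab' h2.symm
  set K2 := K1 ⊔ G.subgraphOfAdj hvb with hK2
  have f2 : subFreedom K2 ≤ 2 := by
    have := addE_newedge K1 hvb hvK1 hbK1 e1; linarith
  have hvK2 : v ∈ K2.verts := by simp [hK2, Subgraph.verts_sup, hvK1]
  have hcK2 : c ∈ K2.verts := by simp [hK2, Subgraph.verts_sup, hcK1]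
  have e2 : s(v, c) ∉ K2.edgeSet := by
    simp only [hK2, hK1, Subgraph.edgeSet_sup, Set.mem_union, edgeSet_subgraphOfAdj,
      Set.mem_singleton_iff]
    push_neg
    refine ⟨⟨fun hmem => hv (K.edge_vert (Subgraph.mem_edgeSet.1 hmem)), ?_⟩, ?_⟩
    · intro hmem
      rcases Sym2.eq_iff.1 hmem with ⟨h1, h2⟩ | ⟨h1, h2⟩
      · exact hva.ne h1
      · exact hac' h2.symm
    · intro hmem
      rcases Sym2.eq_iff.1 hmem with ⟨h1, h2⟩ | ⟨h1, h2⟩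
      · exact hbc' h2.symm
      · exact hvb.ne h1
  set K3 := K2 ⊔ G.subgraphOfAdj hvc with hK3
  have f3 : subFreedom K3 ≤ 1 := by
    have := addE_newedge K2 hvc hvK2 hcK2 e2; linarith
  have hne : K3.verts.Nonempty := ⟨v, by simp [hK3, Subgraph.verts_sup, hvK2]⟩
  have := hInd K3 hne
  linarith


lemma core_contra (hInd : Indep2 G) {v a b c : V}
    (hva : G.Adj v a) (hvb : G.Adj v b) (hvc : G.Adj v c)
    (hab' : a ≠ b) (hac' : a ≠ c) (hbc' : b ≠ c)
    (hab : ¬ G.Adj a b)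
    (hbad : ∀ x y : V, x ∈ ({a, b, c} : Set V) → y ∈ ({a, b, c} : Set V) →
      ¬ G.Adj x y → x ≠ y →
      ∃ H : G.Subgraph, v ∉ H.verts ∧ x ∈ H.verts ∧ y ∈ H.verts ∧ subFreedom H ≤ 2) :
    False := by
  have ma : a ∈ ({a, b, c} : Set V) := by simp
  have mb : b ∈ ({a, b, c} : Set V) := by simp
  have mc : c ∈ ({a, b, c} : Set V) := by simp
  obtain ⟨Hab, hv1, ha1, hb1, hf1⟩ := hbad a b ma mb hab hab'
  -- produce K containing a, b, c with v ∉ K and subFreedom K ≤ 2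
  suffices h : ∃ K : G.Subgraph, v ∉ K.verts ∧ a ∈ K.verts ∧ b ∈ K.verts ∧ c ∈ K.verts ∧
      subFreedom K ≤ 2 by
    obtain ⟨K, h1, h2, h3, h4, h5⟩ := h
    exact tail_contra hInd hva hvb hvc hab' hac' hbc' K h1 h2 h3 h4 h5
  by_cases hac : G.Adj a c
  · by_cases hbc : G.Adj b c
    · by_cases hcH : c ∈ Hab.verts
      · refine ⟨Hab ⊔ G.subgraphOfAdj hac ⊔ G.subgraphOfAdj hbc, ?_, ?_, ?_, ?_, ?_⟩
        · simp only [Subgraph.verts_sup, Set.mem_union, subgraphOfAdj_verts,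
            Set.mem_insert_iff, Set.mem_singleton_iff]
          push_neg
          exact ⟨⟨hv1, hva.ne, hvc.ne⟩, hvb.ne, hvc.ne⟩
        · simp [Subgraph.verts_sup, ha1]
        · simp [Subgraph.verts_sup, hb1]
        · simp [Subgraph.verts_sup]
        · have s1 : subFreedom (Hab ⊔ G.subgraphOfAdj hac) ≤ 2 := by
            have := addE_in Hab hac ha1 hcH; linarith
          have : b ∈ (Hab ⊔ G.subgraphOfAdj hac).verts := by
            simp [Subgraph.verts_sup, hb1]
          have : c ∈ (Hab ⊔ G.subgraphOfAdj hac).verts := by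
            simp [Subgraph.verts_sup]
          have := addE_in (Hab ⊔ G.subgraphOfAdj hac) hbc ‹b ∈ _› this
          linarith
      · refine ⟨Hab ⊔ G.subgraphOfAdj hac ⊔ G.subgraphOfAdj hbc, ?_, ?_, ?_, ?_, ?_⟩
        · simp only [Subgraph.verts_sup, Set.mem_union, subgraphOfAdj_verts,
            Set.mem_insert_iff, Set.mem_singleton_iff]
          push_neg
          exact ⟨⟨hv1, hva.ne, hvc.ne⟩, hvb.ne, hvc.ne⟩
        · simp [Subgraph.verts_sup, ha1]
        · simp [Subgraph.verts_sup, hb1]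
        · simp [Subgraph.verts_sup]
        · have s1 : subFreedom (Hab ⊔ G.subgraphOfAdj hac) ≤ 3 := by
            have := addE_newv Hab hac ha1 hcH; linarith
          have hbm : b ∈ (Hab ⊔ G.subgraphOfAdj hac).verts := by
            simp [Subgraph.verts_sup, hb1]
          have hcm : c ∈ (Hab ⊔ G.subgraphOfAdj hac).verts := by
            simp [Subgraph.verts_sup]
          have he : s(b, c) ∉ (Hab ⊔ G.subgraphOfAdj hac).edgeSet := by
            simp only [Subgraph.edgeSet_sup, Set.mem_union, edgeSet_subgraphOfAdj,
              Set.mem_singleton_iff]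
            push_neg
            constructor
            · intro hmem
              exact hcH (Hab.edge_vert (Hab.adj_symm (Subgraph.mem_edgeSet.1 hmem)))
            · intro hmem
              rcases Sym2.eq_iff.1 hmem with ⟨h1, h2⟩ | ⟨h1, h2⟩
              · exact hab' h1.symm
              · exact hbc' h1
          have := addE_newedge (Hab ⊔ G.subgraphOfAdj hac) hbc hbm hcm he
          linarith
    · obtain ⟨Hbc, hv2, hb2, hc2, hf2⟩ := hbad b c mb mc hbc hbc'
      refine ⟨Hab ⊔ Hbc ⊔ G.subgraphOfAdj hac, ?_, ?_, ?_, ?_, ?_⟩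
      · simp only [Subgraph.verts_sup, Set.mem_union, subgraphOfAdj_verts,
          Set.mem_insert_iff, Set.mem_singleton_iff]
        push_neg
        exact ⟨⟨hv1, hv2⟩, hva.ne, hvc.ne⟩
      · simp [Subgraph.verts_sup, ha1]
      · simp [Subgraph.verts_sup, hb1]
      · simp [Subgraph.verts_sup, hc2]
      · have s1 : subFreedom (Hab ⊔ Hbc) ≤ 2 :=
          sup_tight hInd Hab Hbc hf1 hf2 ⟨b, by simp [Subgraph.verts_inf, hb1, hb2]⟩
        have ham : a ∈ (Hab ⊔ Hbc).verts := by simp [Subgraph.verts_sup, ha1]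
        have hcm : c ∈ (Hab ⊔ Hbc).verts := by simp [Subgraph.verts_sup, hc2]
        have := addE_in (Hab ⊔ Hbc) hac ham hcm
        linarith
  · obtain ⟨Hac, hv2, ha2, hc2, hf2⟩ := hbad a c ma mc hac hac'
    have s1 : subFreedom (Hab ⊔ Hac) ≤ 2 :=
      sup_tight hInd Hab Hac hf1 hf2 ⟨a, by simp [Subgraph.verts_inf, ha1, ha2]⟩
    by_cases hbc : G.Adj b c
    · refine ⟨Hab ⊔ Hac ⊔ G.subgraphOfAdj hbc, ?_, ?_, ?_, ?_, ?_⟩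
      · simp only [Subgraph.verts_sup, Set.mem_union, subgraphOfAdj_verts,
          Set.mem_insert_iff, Set.mem_singleton_iff]
        push_neg
        exact ⟨⟨hv1, hv2⟩, hvb.ne, hvc.ne⟩
      · simp [Subgraph.verts_sup, ha1]
      · simp [Subgraph.verts_sup, hb1]
      · simp [Subgraph.verts_sup, hc2]
      · have hbm : b ∈ (Hab ⊔ Hac).verts := by simp [Subgraph.verts_sup, hb1]
        have hcm : c ∈ (Hab ⊔ Hac).verts := by simp [Subgraph.verts_sup, hc2]
        have := addE_in (Hab ⊔ Hac) hbc hbm hcm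
        linarith
    · obtain ⟨Hbc, hv3, hb3, hc3, hf3⟩ := hbad b c mb mc hbc hbc'
      refine ⟨Hab ⊔ Hac ⊔ Hbc, ?_, ?_, ?_, ?_, ?_⟩
      · simp only [Subgraph.verts_sup, Set.mem_union]
        push_neg
        exact ⟨⟨hv1, hv2⟩, hv3⟩
      · simp [Subgraph.verts_sup, ha1]
      · simp [Subgraph.verts_sup, hb1]
      · simp [Subgraph.verts_sup, hc3]
      · exact sup_tight hInd _ Hbc s1 hf3
          ⟨b, by simp [Subgraph.verts_inf, Subgraph.verts_sup, hb1, hb3]⟩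


/-- The modified graph: delete `v`, add edge `x y`. -/
def Gmod (G : SimpleGraph V) (v x y : V) : SimpleGraph {u : V // u ≠ v} where
  Adj p q := (G.Adj ↑p ↑q ∨ s((p : V), (q : V)) = s(x, y)) ∧ (p : V) ≠ (q : V)
  symm := by
    refine ⟨?_⟩
    rintro p q ⟨h | h, hne⟩
    · exact ⟨Or.inl h.symm, hne.symm⟩
    · exact ⟨Or.inr (Sym2.eq_swap.trans h), hne.symm⟩
  loopless := by refine ⟨?_⟩; rintro p ⟨-, hne⟩; exact hne rfl

/-- Push a subgraph of `Gmod` (minus the new edge) to a subgraph of `G`. -/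
def pushSub (G : SimpleGraph V) (v x y : V) (H' : (Gmod G v x y).Subgraph) : G.Subgraph where
  verts := Subtype.val '' H'.verts
  Adj a b := ∃ p q : {u : V // u ≠ v}, H'.Adj p q ∧ s((p : V), (q : V)) ≠ s(x, y) ∧
    a = ↑p ∧ b = ↑q
  adj_sub := by
    rintro a b ⟨p, q, h, hne, rfl, rfl⟩
    rcases (H'.adj_sub h).1 with h' | h'
    · exact h'
    · exact absurd h' hne
  edge_vert := by
    rintro a b ⟨p, q, h, hne, rfl, rfl⟩
    exact ⟨p, H'.edge_vert h, rfl⟩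
  symm := by
    refine ⟨?_⟩
    rintro a b ⟨p, q, h, hne, rfl, rfl⟩
    exact ⟨q, p, H'.adj_symm h, fun hc => hne (Sym2.eq_swap.trans hc), rfl, rfl⟩

lemma pushSub_verts_ncard (G : SimpleGraph V) (v x y : V) (H' : (Gmod G v x y).Subgraph) :
    (pushSub G v x y H').verts.ncard = H'.verts.ncard :=
  Set.ncard_image_of_injective _ Subtype.val_injective

lemma pushSub_edgeSet (G : SimpleGraph V) {v x y : V} (hx : x ≠ v) (hy : y ≠ v)
    (H' : (Gmod G v x y).Subgraph) :
    (pushSub G v x y H').edgeSet =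
      Sym2.map Subtype.val '' (H'.edgeSet \ {s((⟨x, hx⟩ : {u : V // u ≠ v}), ⟨y, hy⟩)}) := by
  ext e
  induction e using Sym2.ind with
  | _ a b =>
    rw [Subgraph.mem_edgeSet]
    constructor
    · rintro ⟨p, q, h, hne, rfl, rfl⟩
      refine ⟨s(p, q), ⟨Subgraph.mem_edgeSet.2 h, ?_⟩, by simp⟩
      simp only [Set.mem_singleton_iff]
      intro hc
      apply hne
      have := congrArg (Sym2.map (Subtype.val : {u : V // u ≠ v} → V)) hc
      simpa using this
    · rintro ⟨e', ⟨he', hne⟩, heq⟩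
      induction e' using Sym2.ind with
      | _ p q =>
        simp only [Sym2.map_pair_eq] at heq
        have hne' : s((p : V), (q : V)) ≠ s(x, y) := by
          intro hc
          apply hne
          simp only [Set.mem_singleton_iff]
          apply Sym2.map.injective Subtype.val_injective
          simpa using hc
        rcases Sym2.eq_iff.1 heq with ⟨rfl, rfl⟩ | ⟨rfl, rfl⟩
        · exact ⟨p, q, Subgraph.mem_edgeSet.1 he', hne', rfl, rfl⟩
        · exact ⟨q, p, H'.adj_symm (Subgraph.mem_edgeSet.1 he'),
            fun hc => hne' (Sym2.eq_swap.trans hc), rfl, rfl⟩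

lemma indep2_Gmod (G : SimpleGraph V) (hInd : Indep2 G) {v x y : V}
    (hx : x ≠ v) (hy : y ≠ v)
    (hgood : ∀ H : G.Subgraph, v ∉ H.verts → x ∈ H.verts → y ∈ H.verts →
      ¬ subFreedom H ≤ 2) :
    Indep2 (Gmod G v x y) := by
  intro H' hne
  by_contra hlt
  push_neg at hlt
  have hf' : subFreedom H' ≤ 1 := by omega
  set H := pushSub G v x y H' with hH
  have hvne : H.verts.Nonempty := hne.image _
  have hge : 2 ≤ subFreedom H := hInd H hvne
  have hvn : (H'.verts).ncard = H.verts.ncard := (pushSub_verts_ncard G v x y H').symm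
  have hes := pushSub_edgeSet G hx hy H'
  set e0 : Sym2 {u : V // u ≠ v} := s((⟨x, hx⟩ : {u : V // u ≠ v}), ⟨y, hy⟩) with he0
  have hecard : H.edgeSet.ncard = (H'.edgeSet \ {e0}).ncard := by
    rw [hes]
    exact Set.ncard_image_of_injective _ (Sym2.map.injective Subtype.val_injective)
  by_cases hmem : e0 ∈ H'.edgeSet
  · have : (H'.edgeSet \ {e0}).ncard = H'.edgeSet.ncard - 1 :=
      Set.ncard_diff_singleton_of_mem hmem
    have h1 : 0 < H'.edgeSet.ncard := (Set.ncard_pos (Set.toFinite _)).2 ⟨e0, hmem⟩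
    have hfH : subFreedom H ≤ 2 := by
      unfold subFreedom at hf' ⊢
      rw [hvn] at hf'
      rw [hecard, this]
      have : ((H'.edgeSet.ncard - 1 : ℕ) : ℤ) = (H'.edgeSet.ncard : ℤ) - 1 := by
        omega
      rw [this]
      linarith
    have hxm : x ∈ H.verts := by
      have : (⟨x, hx⟩ : {u : V // u ≠ v}) ∈ H'.verts :=
        H'.edge_vert (Subgraph.mem_edgeSet.1 hmem)
      exact ⟨_, this, rfl⟩
    have hym : y ∈ H.verts := by
      have : (⟨y, hy⟩ : {u : V // u ≠ v}) ∈ H'.verts :=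
        H'.edge_vert (H'.adj_symm (Subgraph.mem_edgeSet.1 hmem))
      exact ⟨_, this, rfl⟩
    have hvm : v ∉ H.verts := by
      rintro ⟨p, -, hp⟩
      exact p.2 hp
    exact hgood H hvm hxm hym hfH
  · have : H'.edgeSet \ {e0} = H'.edgeSet := by
      apply Set.diff_singleton_eq_self hmem
    rw [this] at hecard
    unfold subFreedom at hf' hge
    rw [hecard] at hge
    omega


lemma gmod_edge_image (G : SimpleGraph V) {v x y : V} (hx : x ≠ v) (hy : y ≠ v)
    (hxy' : x ≠ y) :
    Sym2.map Subtype.val '' (Gmod G v x y).edgeSet =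
      (G.edgeSet \ G.incidenceSet v) ∪ {s(x, y)} := by
  ext e
  induction e using Sym2.ind with
  | _ a b =>
    constructor
    · rintro ⟨e', he', heq⟩
      induction e' using Sym2.ind with
      | _ p q =>
        simp only [Sym2.map_pair_eq] at heq
        rw [← heq]
        rcases (mem_edgeSet _).1 he' with ⟨h | h, hne⟩
        · left
          refine ⟨(mem_edgeSet G).2 h, ?_⟩
          intro hc
          rcases Sym2.mem_iff.1 hc.2 with h' | h'
          · exact p.2 h'.symm
          · exact q.2 h'.symm
        · right
          exact h
    · rintro (⟨he, hni⟩ | he)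
      · have hadj : G.Adj a b := (mem_edgeSet G).1 he
        have hav : a ≠ v := fun hc => hni ⟨he, by simp [hc]⟩
        have hbv : b ≠ v := fun hc => hni ⟨he, by simp [hc]⟩
        exact ⟨s((⟨a, hav⟩ : {u : V // u ≠ v}), ⟨b, hbv⟩),
          (mem_edgeSet _).2 ⟨Or.inl hadj, hadj.ne⟩, by simp⟩
      · simp only [Set.mem_singleton_iff] at he
        exact ⟨s((⟨x, hx⟩ : {u : V // u ≠ v}), ⟨y, hy⟩),
          (mem_edgeSet _).2 ⟨Or.inr rfl, hxy'⟩, by simpa using he.symm⟩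

lemma gFreedom_Gmod (G : SimpleGraph V) {v x y : V} (hx : x ≠ v) (hy : y ≠ v)
    (hxy' : x ≠ y) (hxy : ¬ G.Adj x y)
    (hdeg : (G.neighborSet v).ncard = 3) (hgf : gFreedom G = 2) :
    gFreedom (Gmod G v x y) = 2 := by
  classical
  have hmap := gmod_edge_image G hx hy hxy'
  have hinc : (G.incidenceSet v).ncard = 3 := by
    rw [← Nat.card_coe_set_eq, Nat.card_congr (G.incidenceSetEquivNeighborSet v),
      Nat.card_coe_set_eq, hdeg]
  have hsub : G.incidenceSet v ⊆ G.edgeSet := G.incidenceSet_subset v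
  have hle : 3 ≤ G.edgeSet.ncard := by
    rw [← hinc]; exact Set.ncard_le_ncard hsub (Set.toFinite _)
  have hdiff : (G.edgeSet \ G.incidenceSet v).ncard = G.edgeSet.ncard - 3 := by
    rw [Set.ncard_diff hsub (Set.toFinite _), hinc]
  have hxyne : s(x, y) ∉ G.edgeSet \ G.incidenceSet v := by
    intro hc
    exact hxy ((mem_edgeSet G).1 hc.1)
  have hecard : (Gmod G v x y).edgeSet.ncard = (G.edgeSet.ncard - 3) + 1 := by
    have h1 : (Sym2.map Subtype.val '' (Gmod G v x y).edgeSet).ncard =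
        (Gmod G v x y).edgeSet.ncard :=
      Set.ncard_image_of_injective _ (Sym2.map.injective Subtype.val_injective)
    rw [← h1, hmap, Set.union_singleton, Set.ncard_insert_of_notMem hxyne (Set.toFinite _),
      hdiff]
  have huniv : (Set.univ : Set {u : V // u ≠ v}).ncard = (Set.univ : Set V).ncard - 1 := by
    rw [Set.ncard_univ, Set.ncard_univ, Nat.card_eq_fintype_card, Nat.card_eq_fintype_card,
      Fintype.card_subtype_compl, Fintype.card_subtype_eq]
  have hvuniv : 1 ≤ (Set.univ : Set V).ncard := by
    rw [Set.ncard_univ, Nat.card_eq_fintype_card]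
    exact Fintype.card_pos_iff.2 ⟨v⟩
  unfold gFreedom at hgf ⊢
  rw [hecard, huniv]
  omega

lemma henneberg2_Gmod (G : SimpleGraph V) {v x y z : V}
    (hvx : G.Adj v x) (hvy : G.Adj v y) (hvz : G.Adj v z)
    (hxy' : x ≠ y) (hzx : z ≠ x) (hzy : z ≠ y) (hxy : ¬ G.Adj x y)
    (hN : G.neighborSet v = {x, y, z}) :
    Henneberg2Rel (Gmod G v x y) G (Function.Embedding.subtype (· ≠ v)) v := by
  have hx : x ≠ v := hvx.ne'
  have hy : y ≠ v := hvy.ne'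
  have hz : z ≠ v := hvz.ne'
  refine ⟨?_, ?_, ⟨x, hx⟩, ⟨y, hy⟩, ⟨z, hz⟩, ⟨Or.inr rfl, hxy'⟩,
    fun h => hzx (congrArg Subtype.val h), fun h => hzy (congrArg Subtype.val h), ?_⟩
  · intro u
    by_cases h : u = v
    · exact Or.inr h
    · exact Or.inl ⟨⟨u, h⟩, by simp⟩
  · rintro ⟨p, hp⟩
    simp only [Function.Embedding.coe_subtype] at hp
    exact p.2 hp
  · intro s t
    simp only [Function.Embedding.coe_subtype]
    constructor
    · intro h
      by_cases hs : s = v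
      · subst hs
        have : t ∈ G.neighborSet s := h
        rw [hN] at this
        rcases this with rfl | rfl | rfl
        · exact Or.inr (Or.inl ⟨rfl, Or.inl rfl⟩)
        · exact Or.inr (Or.inl ⟨rfl, Or.inr (Or.inl rfl)⟩)
        · exact Or.inr (Or.inl ⟨rfl, Or.inr (Or.inr rfl)⟩)
      · by_cases ht : t = v
        · subst ht
          have : s ∈ G.neighborSet t := h.symm
          rw [hN] at this
          rcases this with rfl | rfl | rfl
          · exact Or.inr (Or.inr ⟨rfl, Or.inl rfl⟩)
          · exact Or.inr (Or.inr ⟨rfl, Or.inr (Or.inl rfl)⟩)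
          · exact Or.inr (Or.inr ⟨rfl, Or.inr (Or.inr rfl)⟩)
        · left
          refine ⟨⟨s, hs⟩, ⟨t, ht⟩, ⟨Or.inl h, h.ne⟩, ?_, rfl, rfl⟩
          intro hc
          rcases Sym2.eq_iff.1 hc with ⟨h1, h2⟩ | ⟨h1, h2⟩
          · have : s = x := congrArg Subtype.val h1
            have ht' : t = y := congrArg Subtype.val h2
            subst this; subst ht'
            exact hxy h
          · have : s = y := congrArg Subtype.val h1
            have ht' : t = x := congrArg Subtype.val h2
            subst this; subst ht'
            exact hxy h.symm
    · rintro (⟨p, q, hpq, hne, rfl, rfl⟩ | ⟨rfl, (rfl | rfl | rfl)⟩ |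
        ⟨rfl, (rfl | rfl | rfl)⟩)
      · rcases hpq.1 with h | h
        · exact h
        · exfalso
          apply hne
          rcases Sym2.eq_iff.1 h with ⟨h1, h2⟩ | ⟨h1, h2⟩
          · have hp : p = (⟨x, hx⟩ : {u : V // u ≠ v}) := Subtype.ext h1
            have hq : q = (⟨y, hy⟩ : {u : V // u ≠ v}) := Subtype.ext h2
            rw [hp, hq]
          · have hp : p = (⟨y, hy⟩ : {u : V // u ≠ v}) := Subtype.ext h1
            have hq : q = (⟨x, hx⟩ : {u : V // u ≠ v}) := Subtype.ext h2
            rw [hp, hq]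
            exact Sym2.eq_swap
      · exact hvx
      · exact hvy
      · exact hvz
      · exact hvx.symm
      · exact hvy.symm
      · exact hvz.symm


end AuxLemmas

/-- If `G` is maximally independent of type 2 then either `G` has
a vertex of degree 2, or every degree 3 vertex of `G` lies in a `K₄` subgraph, or
`G` is obtained from some maximally independent graph of type 2 by a Henneberg 2
move. -/
theorem maxIndep2_trichotomy {V : Type} [Fintype V] (G : SimpleGraph V)
    (hG : MaxIndep2 G) :
    (∃ v : V, (G.neighborSet v).ncard = 2) ∨
    (∀ v : V, (G.neighborSet v).ncard = 3 →
      ∃ s : Set V, v ∈ s ∧ s.ncard = 4 ∧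
        ∀ x ∈ s, ∀ y ∈ s, x ≠ y → G.Adj x y) ∨
    (∃ (w : V) (G' : SimpleGraph {u : V // u ≠ w}), MaxIndep2 G' ∧
      Henneberg2Rel G' G (Function.Embedding.subtype (· ≠ w)) w) := by
  classical
  by_cases hK4 : ∀ v : V, (G.neighborSet v).ncard = 3 →
      ∃ s : Set V, v ∈ s ∧ s.ncard = 4 ∧ ∀ x ∈ s, ∀ y ∈ s, x ≠ y → G.Adj x y
  · exact Or.inr (Or.inl hK4)
  push_neg at hK4
  obtain ⟨v, hdeg, hns⟩ := hK4
  obtain ⟨a, b, c, hab', hac', hbc', hN⟩ := Set.ncard_eq_three.1 hdeg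
  have hva : G.Adj v a := by
    have : a ∈ G.neighborSet v := by rw [hN]; simp
    exact this
  have hvb : G.Adj v b := by
    have : b ∈ G.neighborSet v := by rw [hN]; simp
    exact this
  have hvc : G.Adj v c := by
    have : c ∈ G.neighborSet v := by rw [hN]; simp
    exact this
  have hnotK4 : ¬(G.Adj a b ∧ G.Adj a c ∧ G.Adj b c) := by
    rintro ⟨h1, h2, h3⟩
    have hcard : ({v, a, b, c} : Set V).ncard = 4 := by
      rw [Set.ncard_insert_of_notMem (by simp [hva.ne, hvb.ne, hvc.ne]) (Set.toFinite _),
        Set.ncard_insert_of_notMem (by simp [hab', hac']) (Set.toFinite _),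
        Set.ncard_insert_of_notMem (by simp [hbc']) (Set.toFinite _),
        Set.ncard_singleton]
    obtain ⟨p, hp, q, hq, hpq, hnadj⟩ := hns {v, a, b, c} (by simp) hcard
    apply hnadj
    simp only [Set.mem_insert_iff, Set.mem_singleton_iff] at hp hq
    rcases hp with rfl | rfl | rfl | rfl <;> rcases hq with rfl | rfl | rfl | rfl <;>
      first
        | exact absurd rfl hpq
        | exact hva | exact hvb | exact hvc
        | exact hva.symm | exact hvb.symm | exact hvc.symm
        | exact h1 | exact h1.symm | exact h2 | exact h2.symm
        | exact h3 | exact h3.symm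
  have hbadAll : ¬ (∀ x y : V, x ∈ ({a, b, c} : Set V) → y ∈ ({a, b, c} : Set V) →
      ¬ G.Adj x y → x ≠ y →
      ∃ H : G.Subgraph, v ∉ H.verts ∧ x ∈ H.verts ∧ y ∈ H.verts ∧ subFreedom H ≤ 2) := by
    intro hbad
    by_cases h1 : G.Adj a b
    · by_cases h2 : G.Adj a c
      · have h3 : ¬ G.Adj b c := fun h3 => hnotK4 ⟨h1, h2, h3⟩
        exact core_contra hG.1 hvb hvc hva hbc' hab'.symm hac'.symm h3
          (fun x y hx hy => hbad x y (by simp at hx ⊢; tauto) (by simp at hy ⊢; tauto))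
      · exact core_contra hG.1 hva hvc hvb hac' hab' hbc'.symm h2
          (fun x y hx hy => hbad x y (by simp at hx ⊢; tauto) (by simp at hy ⊢; tauto))
    · exact core_contra hG.1 hva hvb hvc hab' hac' hbc' h1
        (fun x y hx hy => hbad x y (by simp at hx ⊢; tauto) (by simp at hy ⊢; tauto))
  have hex : ∃ x y : V, x ∈ ({a, b, c} : Set V) ∧ y ∈ ({a, b, c} : Set V) ∧
      ¬ G.Adj x y ∧ x ≠ y ∧
      ∀ H : G.Subgraph, v ∉ H.verts → x ∈ H.verts → y ∈ H.verts →
        ¬ subFreedom H ≤ 2 := by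
    by_contra hcon
    push_neg at hcon
    exact hbadAll (fun x y hx hy hnadj hne => hcon x y hx hy hnadj hne)
  obtain ⟨x, y, hx, hy, hnadj, hne, hgood⟩ := hex
  have hperm : ∃ zz : V, G.neighborSet v = {x, y, zz} ∧ zz ≠ x ∧ zz ≠ y := by
    simp only [Set.mem_insert_iff, Set.mem_singleton_iff] at hx hy
    rcases hx with hx1 | hx1 | hx1 <;> rcases hy with hy1 | hy1 | hy1 <;>
        subst hx1 <;> subst hy1
    · exact absurd rfl hne
    · exact ⟨c, by rw [hN], hac'.symm, hbc'.symm⟩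
    · exact ⟨b, by rw [hN]; ext u; simp; tauto, hab'.symm, hbc'⟩
    · exact ⟨c, by rw [hN]; ext u; simp; tauto, hbc'.symm, hac'.symm⟩
    · exact absurd rfl hne
    · exact ⟨a, by rw [hN]; ext u; simp; tauto, hab', hac'⟩
    · exact ⟨b, by rw [hN]; ext u; simp; tauto, hbc', hab'.symm⟩
    · exact ⟨a, by rw [hN]; ext u; simp; tauto, hac', hab'⟩
    · exact absurd rfl hne
  obtain ⟨zz, hN', hzx, hzy⟩ := hperm
  have hvx : G.Adj v x := by
    have : x ∈ G.neighborSet v := by rw [hN']; simp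
    exact this
  have hvy : G.Adj v y := by
    have : y ∈ G.neighborSet v := by rw [hN']; simp
    exact this
  have hvz : G.Adj v zz := by
    have : zz ∈ G.neighborSet v := by rw [hN']; simp
    exact this
  refine Or.inr (Or.inr ⟨v, Gmod G v x y, ⟨?_, ?_⟩, ?_⟩)
  · exact indep2_Gmod G hG.1 hvx.ne' hvy.ne' hgood
  · exact gFreedom_Gmod G hvx.ne' hvy.ne' hne hnadj hdeg hG.2
  · exact henneberg2_Gmod G hvx hvy hvz hne hzx hzy hnadj hN'
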